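/- For every integer N ≥ 2 there exists ε > 0 such that for every lattice Λ ⊆ ℝ^N of full rank N and covolume 1, there exist real numbers a₁, …, a_N > 0 with a₁·a₂·⋯·a_N = 1 such that the diagonal matrix g = diag(a₁, …, a_N) satisfies ‖g v‖ ≥ ε for every nonzero v ∈ Λ, where ‖·‖ is the standard Euclidean norm on ℝ^N. -/

import Mathlib

/-- The covolume of a discrete subgroup `Δ` of `ℝ^N` in its real span (by convention
`covol {0} = 1`). -/
noncomputable def covol {N : ℕ} (Δ : AddSubgroup (EuclideanSpace ℝ (Fin N))) : ℝ :=
  sInf { x : ℝ | ∃ (r : ℕ) (v : Fin r → EuclideanSpace ℝ (Fin N)),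
    LinearIndependent ℝ v ∧
    (Submodule.span ℤ (Set.range v)).toAddSubgroup = Δ ∧
    x = Real.sqrt (Matrix.det (Matrix.of fun i j : Fin r => (inner ℝ (v i) (v j) : ℝ))) }

open Matrix

namespace Stmt6

variable {N : ℕ}





noncomputable def dAct (t : Fin N → ℝ) :
    EuclideanSpace ℝ (Fin N) →ₗ[ℝ] EuclideanSpace ℝ (Fin N) :=
  Matrix.toEuclideanLin (Matrix.diagonal fun i => Real.exp (t i))

lemma dAct_apply (t : Fin N → ℝ) (v : EuclideanSpace ℝ (Fin N)) (i : Fin N) :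
    dAct t v i = Real.exp (t i) * v i := by
  simp [dAct, Matrix.toEuclideanLin_apply, Matrix.mulVec_diagonal]

lemma dAct_add (t s : Fin N → ℝ) (v : EuclideanSpace ℝ (Fin N)) :
    dAct (t + s) v = dAct s (dAct t v) := by
  ext i
  rw [show dAct (t+s) v i = Real.exp ((t+s) i) * v i from dAct_apply _ v i,
    show dAct s (dAct t v) i = Real.exp (s i) * (dAct t v i) from dAct_apply _ _ i,
    dAct_apply, Pi.add_apply, Real.exp_add]
  ring

lemma coord_sum {m : ℕ} (γ : Fin m → ℝ) (w : Fin m → EuclideanSpace ℝ (Fin N)) (i : Fin N) :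
    (∑ q, γ q • w q) i = ∑ q, γ q * w q i := by
  simp [WithLp.ofLp_sum, Finset.sum_apply]

lemma coord_zsum {m : ℕ} (γ : Fin m → ℤ) (w : Fin m → EuclideanSpace ℝ (Fin N)) (i : Fin N) :
    (∑ q, γ q • w q) i = ∑ q, (γ q : ℝ) * w q i := by
  rw [show (∑ q, γ q • w q) = ∑ q, (γ q : ℝ) • w q by
    refine Finset.sum_congr rfl fun q _ => ?_
    exact (Int.cast_smul_eq_zsmul ℝ (γ q) (w q)).symm]
  exact coord_sum _ w i

lemma abs_coord_le_norm (x : EuclideanSpace ℝ (Fin N)) (i : Fin N) : |x i| ≤ ‖x‖ := by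
  rw [EuclideanSpace.norm_eq]
  have h1 : |x i| = Real.sqrt (‖x i‖^2) := by rw [Real.sqrt_sq_eq_abs]; simp
  rw [h1]
  apply Real.sqrt_le_sqrt
  exact Finset.single_le_sum (f := fun j => ‖x j‖^2) (fun j _ => by positivity) (Finset.mem_univ i)

lemma norm_le_of_coords (x : EuclideanSpace ℝ (Fin N)) (M : ℝ) (hM : 0 ≤ M)
    (h : ∀ i, |x i| ≤ M) : ‖x‖ ≤ Real.sqrt N * M := by
  rw [EuclideanSpace.norm_eq]
  have : ∑ i, ‖x i‖^2 ≤ (N : ℝ) * M^2 := by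
    calc ∑ i, ‖x i‖^2 ≤ ∑ _i : Fin N, M^2 := by
          refine Finset.sum_le_sum fun i _ => ?_
          rw [Real.norm_eq_abs, sq_abs (x i)]
          calc x i ^2 = |x i|^2 := (sq_abs _).symm
          _ ≤ M^2 := pow_le_pow_left₀ (abs_nonneg _) (h i) 2
      _ = (N:ℝ) * M^2 := by simp [mul_comm]
  calc Real.sqrt (∑ i, ‖x i‖^2) ≤ Real.sqrt ((N:ℝ) * M^2) := Real.sqrt_le_sqrt this
    _ = Real.sqrt N * M := by
        rw [Real.sqrt_mul (by positivity), Real.sqrt_sq hM]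

lemma sum_abs_le_sqrt {m : ℕ} (u : Fin m → ℝ) :
    ∑ p, |u p| ≤ Real.sqrt m * Real.sqrt (∑ p, (u p)^2) := by
  have h := Finset.sum_mul_sq_le_sq_mul_sq Finset.univ (fun _ : Fin m => (1:ℝ)) (fun p => |u p|)
  have h2 : (∑ p, |u p|)^2 ≤ (m:ℝ) * ∑ p, (u p)^2 := by
    simpa [sq_abs] using h
  have h3 : ∑ p, |u p| = Real.sqrt ((∑ p, |u p|)^2) :=
    (Real.sqrt_sq (Finset.sum_nonneg fun p _ => abs_nonneg _)).symm
  rw [h3]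
  calc Real.sqrt ((∑ p, |u p|)^2) ≤ Real.sqrt ((m:ℝ) * ∑ p, (u p)^2) := Real.sqrt_le_sqrt h2
    _ = Real.sqrt m * Real.sqrt (∑ p, (u p)^2) := Real.sqrt_mul (by positivity) _


lemma exists_phi : ∀ {j : ℕ} (w : Fin j → EuclideanSpace ℝ (Fin N)),
    LinearIndependent ℝ w → ∃ φ : Fin j → Fin N,
      (Matrix.of fun p q => w q (φ p)).det ≠ 0 := by
  intro j
  induction j with
  | zero =>
    intro w _
    exact ⟨fun p => p.elim0, by rw [Matrix.det_isEmpty]; norm_num⟩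
  | succ j ih =>
    intro w hw
    obtain ⟨φ', hφ'⟩ := ih (w ∘ Fin.castSucc) (hw.comp _ (Fin.castSucc_injective _))
    by_contra hno
    push_neg at hno
    set D : Fin (j+1) → ℝ := fun q =>
      (Matrix.of fun (p' : Fin j) (q'' : Fin j) => w (q.succAbove q'') (φ' p')).det with hD
    have hexp : ∀ i : Fin N, ∑ q : Fin (j+1), ((-1:ℝ)^(j + q.val) * D q) * w q i = 0 := by
      intro i
      have h1 := Matrix.det_succ_row
        (Matrix.of fun p q => w q ((Fin.snoc φ' i : Fin (j+1) → Fin N) p)) (Fin.last j)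
      rw [hno (Fin.snoc φ' i)] at h1
      have h2 : ∀ q : Fin (j+1),
          ((Matrix.of fun p q => w q ((Fin.snoc φ' i : Fin (j+1) → Fin N) p)).submatrix
            (Fin.last j).succAbove q.succAbove)
            = Matrix.of fun (p' : Fin j) (q'' : Fin j) => w (q.succAbove q'') (φ' p') := by
        intro q
        ext p' q''
        show w (q.succAbove q'') ((Fin.snoc φ' i : Fin (j+1) → Fin N) ((Fin.last j).succAbove p')) = _
        rw [Fin.succAbove_last]
        show w (q.succAbove q'') ((Fin.snoc φ' i : Fin (j+1) → Fin N) p'.castSucc) = _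
        rw [Fin.snoc_castSucc]
        rfl
      calc ∑ q : Fin (j+1), ((-1:ℝ)^(j + q.val) * D q) * w q i
          = ∑ q : Fin (j+1), (-1:ℝ)^((Fin.last j).val + q.val) *
              (Matrix.of fun p q => w q ((Fin.snoc φ' i : Fin (j+1) → Fin N) p)) (Fin.last j) q *
              ((Matrix.of fun p q => w q ((Fin.snoc φ' i : Fin (j+1) → Fin N) p)).submatrix
                (Fin.last j).succAbove q.succAbove).det := by
            refine Finset.sum_congr rfl fun q _ => ?_
            rw [h2 q, Fin.val_last]
            show (-1:ℝ)^(j + q.val) * D q * w q i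
              = (-1:ℝ)^(j + q.val) * w q ((Fin.snoc φ' i : Fin (j+1) → Fin N) (Fin.last j)) * D q
            rw [Fin.snoc_last]
            ring
        _ = 0 := h1.symm
    have hzero : ∑ q : Fin (j+1), ((-1:ℝ)^(j + q.val) * D q) • w q = 0 := by
      ext i
      rw [coord_sum]
      exact hexp i
    have hclast := Fintype.linearIndependent_iff.1 hw _ hzero (Fin.last j)
    have hDlast : D (Fin.last j) = (Matrix.of fun p q => (w ∘ Fin.castSucc) q (φ' p)).det := by
      rw [hD]
      show (Matrix.of fun (p' : Fin j) (q'' : Fin j) => w ((Fin.last j).succAbove q'') (φ' p')).det = _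
      congr 1
      ext p' q''
      rw [Fin.succAbove_last]
      rfl
    rw [hDlast] at hclast
    rcases mul_eq_zero.1 hclast with h | h
    · exact absurd h (pow_ne_zero _ (by norm_num))
    · exact hφ' h

lemma kci {j : ℕ} (w : Fin j → EuclideanSpace ℝ (Fin N)) (φ : Fin j → Fin N)
    (hmax : ∀ ψ : Fin j → Fin N,
      |(Matrix.of fun p q => w q (ψ p)).det| ≤ |(Matrix.of fun p q => w q (φ p)).det|)
    (hdet : (Matrix.of fun p q => w q (φ p)).det ≠ 0)
    (x : EuclideanSpace ℝ (Fin N)) (hx : x ∈ Submodule.span ℝ (Set.range w)) (i : Fin N) :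
    |x i| ≤ ∑ p, |x (φ p)| := by
  obtain ⟨γ, hγ⟩ := (Submodule.mem_span_range_iff_exists_fun ℝ).1 hx
  set A : Matrix (Fin j) (Fin j) ℝ := Matrix.of fun p q => w q (φ p) with hA
  set y : Fin j → ℝ := fun q => w q i with hy
  set c : Fin j → ℝ := fun p => (A.updateRow p y).det / A.det with hc
  have hup : ∀ p, A.updateRow p y = Matrix.of fun p' q => w q (Function.update φ p i p') := by
    intro p
    ext p' q
    rcases eq_or_ne p' p with rfl | hne
    · rw [Matrix.updateRow_self]
      show y q = w q (Function.update φ p' i p')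
      rw [Function.update_self]
    · rw [Matrix.updateRow_ne hne]
      show A p' q = w q (Function.update φ p i p')
      rw [Function.update_of_ne hne]
      rfl
  have hcle : ∀ p, |c p| ≤ 1 := by
    intro p
    rw [hc]
    rw [abs_div]
    rw [div_le_one (abs_pos.2 hdet)]
    rw [hup p]
    exact hmax _
  have hcram : ∀ q, ∑ p, c p * A p q = y q := by
    intro q
    have h1 := congrFun (Matrix.mulVec_cramer Aᵀ y) q
    have h2 : ∀ p, Matrix.cramer Aᵀ y p = (A.updateRow p y).det := by
      intro p
      rw [Matrix.cramer_apply, Matrix.updateCol_transpose, Matrix.det_transpose]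
    have h3 : (Aᵀ.mulVec (Matrix.cramer Aᵀ y)) q = ∑ p, A p q * (A.updateRow p y).det := by
      rw [Matrix.mulVec]
      show ∑ p, Aᵀ q p * Matrix.cramer Aᵀ y p = _
      refine Finset.sum_congr rfl fun p _ => ?_
      rw [h2 p, Matrix.transpose_apply]
    rw [h3] at h1
    have h4 : (Aᵀ.det • y) q = A.det * y q := by
      rw [Matrix.det_transpose]; rfl
    rw [h4] at h1
    calc ∑ p, c p * A p q = (∑ p, A p q * (A.updateRow p y).det) / A.det := by
          rw [Finset.sum_div]
          refine Finset.sum_congr rfl fun p _ => ?_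
          rw [hc]
          field_simp
      _ = (A.det * y q) / A.det := by rw [h1]
      _ = y q := by field_simp
  have hxφ : ∀ p, x (φ p) = ∑ q, γ q * w q (φ p) := by
    intro p
    rw [← hγ]
    exact coord_sum γ w (φ p)
  have hxi : x i = ∑ p, c p * x (φ p) := by
    calc x i = ∑ q, γ q * w q i := by rw [← hγ]; exact coord_sum γ w i
      _ = ∑ q, γ q * ∑ p, c p * A p q := by
          refine Finset.sum_congr rfl fun q _ => ?_
          rw [hcram q]
      _ = ∑ q, ∑ p, c p * (γ q * w q (φ p)) := by
          refine Finset.sum_congr rfl fun q _ => ?_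
          rw [Finset.mul_sum]
          refine Finset.sum_congr rfl fun p _ => ?_
          show γ q * (c p * A p q) = c p * (γ q * w q (φ p))
          have : A p q = w q (φ p) := rfl
          rw [this]; ring
      _ = ∑ p, ∑ q, c p * (γ q * w q (φ p)) := Finset.sum_comm
      _ = ∑ p, c p * x (φ p) := by
          refine Finset.sum_congr rfl fun p _ => ?_
          rw [hxφ p, Finset.mul_sum]
  rw [hxi]
  calc |∑ p, c p * x (φ p)| ≤ ∑ p, |c p * x (φ p)| := Finset.abs_sum_le_sum_abs _ _
    _ ≤ ∑ p, |x (φ p)| := by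
        refine Finset.sum_le_sum fun p _ => ?_
        rw [abs_mul]
        calc |c p| * |x (φ p)| ≤ 1 * |x (φ p)| :=
              mul_le_mul_of_nonneg_right (hcle p) (abs_nonneg _)
          _ = |x (φ p)| := one_mul _

noncomputable def BB (N : ℕ) : ℝ := 2 * Real.sqrt N * (8*N)^(N-1)

lemma BB_pos (hN : 2 ≤ N) : 0 < BB N := by
  have h1 : (0:ℝ) < N := by exact_mod_cast (by omega : 0 < N)
  exact mul_pos (mul_pos two_pos (Real.sqrt_pos.2 h1)) (pow_pos (by linarith) _)

lemma sqrt_sum_sq (y : EuclideanSpace ℝ (Fin N)) :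
    Real.sqrt (∑ i, (y i)^2) = ‖y‖ := by
  rw [EuclideanSpace.norm_eq]
  congr 1
  refine Finset.sum_congr rfl fun i _ => ?_
  rw [Real.norm_eq_abs, sq_abs]

lemma key (hN : 2 ≤ N) (Λ : AddSubgroup (EuclideanSpace ℝ (Fin N)))
    (t₀ : Fin N → ℝ) (ρ : ℝ) (hρ : 0 < ρ)
    (H1 : ∀ v ∈ Λ, v ≠ 0 → ρ/2 < ‖dAct t₀ v‖)
    (H2 : ∀ s : Fin N → ℝ, (∑ i, s i) = 0 →
      ∃ v, v ∈ Λ ∧ v ≠ 0 ∧ ‖dAct (t₀ + s) v‖ < 2*ρ) :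
    ∀ j : ℕ, j ≤ N → ∃ w : Fin j → EuclideanSpace ℝ (Fin N),
      (∀ p, ∃ v, v ∈ Λ ∧ v ≠ 0 ∧ w p = dAct t₀ v) ∧ LinearIndependent ℝ w ∧
      ∀ p, ‖w p‖ ≤ BB N * ρ := by
  have hN0 : (0:ℝ) < N := by
    have : (2:ℝ) ≤ N := by exact_mod_cast hN
    linarith
  have hN1 : (1:ℝ) ≤ N := by exact_mod_cast (by omega : 1 ≤ N)
  have h8N : (1:ℝ) ≤ 8*N := by linarith
  set τ : ℝ := Real.log (8*N) with hτdef
  have hexpτ : Real.exp τ = 8*N := Real.exp_log (by nlinarith)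
  have hτ0 : 0 ≤ τ := Real.log_nonneg h8N
  intro j
  induction j with
  | zero =>
    intro _
    refine ⟨fun p => p.elim0, fun p => p.elim0, linearIndependent_empty_type, fun p => p.elim0⟩
  | succ j ih =>
    intro hj1
    have hjN : j < N := Nat.lt_of_succ_le hj1
    obtain ⟨w, hwv, hwi, hwb⟩ := ih (Nat.le_of_lt hjN)
    have hNj : (0:ℝ) < (N:ℝ) - j := by
      have : (j:ℝ) + 1 ≤ N := by exact_mod_cast hjN
      linarith
    -- maximizing selection
    obtain ⟨φ₀, hφ₀⟩ := exists_phi w hwi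
    obtain ⟨φ, -, hφmax⟩ := Finset.exists_max_image Finset.univ
      (fun ψ : Fin j → Fin N => |(Matrix.of fun p q => w q (ψ p)).det|)
      ⟨φ₀, Finset.mem_univ _⟩
    have hφmax' : ∀ ψ : Fin j → Fin N,
        |(Matrix.of fun p q => w q (ψ p)).det| ≤ |(Matrix.of fun p q => w q (φ p)).det| :=
      fun ψ => hφmax ψ (Finset.mem_univ _)
    have hφdet : (Matrix.of fun p q => w q (φ p)).det ≠ 0 := by
      intro h0
      have := hφmax' φ₀
      rw [h0] at this
      simp at this
      exact hφ₀ this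
    have hφinj : Function.Injective φ := by
      intro p q hpq
      by_contra hne
      apply hφdet
      refine Matrix.det_zero_of_row_eq hne ?_
      funext q'
      show w q' (φ p) = w q' (φ q)
      rw [hpq]
    -- the direction vector
    set T : Finset (Fin N) := Finset.image φ Finset.univ with hT
    have hTcard : T.card = j := by
      rw [hT, Finset.card_image_of_injective _ hφinj, Finset.card_univ, Fintype.card_fin]
    set sv : Fin N → ℝ := fun i => if i ∈ T then τ else -((j:ℝ)*τ)/((N:ℝ)-(j:ℝ)) with hsv
    have hsv_sum : (∑ i, sv i) = 0 := by
      have hsplit := Finset.sum_filter_add_sum_filter_not Finset.univ (· ∈ T) sv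
      have hf1 : Finset.univ.filter (· ∈ T) = T := by
        ext i; simp
      have hf2 : Finset.univ.filter (fun i => ¬ i ∈ T) = Finset.univ \ T := by
        ext i; simp
      have hcard2 : (Finset.univ \ T).card = N - j := by
        rw [Finset.card_sdiff_of_subset (Finset.subset_univ T), hTcard, Finset.card_univ, Fintype.card_fin]
      have hone : ∑ i ∈ T, sv i = (j:ℝ) * τ := by
        rw [Finset.sum_congr rfl (fun i hi => show sv i = τ by simp only [hsv]; rw [if_pos hi])]
        rw [Finset.sum_const, hTcard]
        simp [mul_comm]
      have htwo : ∑ i ∈ Finset.univ \ T, sv i = ((N:ℝ) - j) * (-((j:ℝ)*τ)/((N:ℝ)-(j:ℝ))) := by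
        rw [Finset.sum_congr rfl (fun i hi => show sv i = -((j:ℝ)*τ)/((N:ℝ)-(j:ℝ)) by
          simp only [hsv]; rw [if_neg (Finset.mem_sdiff.1 hi).2])]
        rw [Finset.sum_const, hcard2]
        have hc : ((N - j : ℕ) : ℝ) = (N:ℝ) - j := by
          rw [Nat.cast_sub (Nat.le_of_lt hjN)]
        rw [nsmul_eq_mul, hc]
      rw [← hsplit, hf1, hf2, hone, htwo]
      field_simp
      ring
    have hsv_phi : ∀ p, sv (φ p) = τ := by
      intro p
      simp only [hsv]
      rw [if_pos]
      exact Finset.mem_image_of_mem φ (Finset.mem_univ p)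
    have hsv_lb : ∀ i, Real.exp (-(sv i)) ≤ (8*N)^(N-1) := by
      intro i
      have hpow : Real.exp (((N:ℝ)-1)*τ) = (8*N)^(N-1) := by
        have h1 : ((N:ℝ)-1) = ((N-1 : ℕ):ℝ) := by
          have : 1 ≤ N := by omega
          push_cast [Nat.cast_sub this]
          ring
        rw [h1, Real.exp_nat_mul, hexpτ]
      simp only [hsv]
      by_cases hi : i ∈ T
      · rw [if_pos hi]
        rw [← hpow]
        apply Real.exp_le_exp.2
        nlinarith
      · rw [if_neg hi]
        rw [← hpow]
        apply Real.exp_le_exp.2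
        rw [neg_div, neg_neg]
        rw [div_le_iff₀ hNj]
        have hj1' : (j:ℝ) ≤ (N:ℝ)-1 := by
          have : (j:ℝ)+1 ≤ N := by exact_mod_cast hjN
          linarith
        have h1N : (1:ℝ) ≤ (N:ℝ)-j := by linarith
        have e1 : (j:ℝ)*τ ≤ ((N:ℝ)-1)*τ := mul_le_mul_of_nonneg_right hj1' hτ0
        have e2 : ((N:ℝ)-1)*τ*1 ≤ ((N:ℝ)-1)*τ*((N:ℝ)-(j:ℝ)) :=
          mul_le_mul_of_nonneg_left h1N (mul_nonneg (by linarith) hτ0)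
        linarith
    -- get the new vector
    obtain ⟨v, hvΛ, hvne, hvs⟩ := H2 sv hsv_sum
    set wnew := dAct t₀ v with hwnewdef
    set y := dAct sv wnew with hydef
    have hyshort : ‖y‖ < 2*ρ := by
      rw [hydef, hwnewdef, ← dAct_add]
      exact hvs
    have hwlb : ρ/2 < ‖wnew‖ := H1 v hvΛ hvne
    have hycoord : ∀ i, y i = Real.exp (sv i) * wnew i := fun i => dAct_apply sv wnew i
    have h8Npos : (0:ℝ) < 8*N := by linarith
    have hnotin : wnew ∉ Submodule.span ℝ (Set.range w) := by
      intro hin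
      set Sp := ∑ p, |wnew (φ p)| with hSp
      have hSp0 : 0 ≤ Sp := Finset.sum_nonneg fun p _ => abs_nonneg _
      have h1 : ‖wnew‖ ≤ Real.sqrt N * Sp :=
        norm_le_of_coords wnew Sp hSp0 (kci w φ hφmax' hφdet wnew hin)
      have h2 : (8*N) * Sp = ∑ p, |y (φ p)| := by
        rw [hSp, Finset.mul_sum]
        refine Finset.sum_congr rfl fun p _ => ?_
        rw [hycoord (φ p), abs_mul, hsv_phi p, hexpτ, abs_of_pos h8Npos]
      have h3 : ∑ p, |y (φ p)| ≤ Real.sqrt j * ‖y‖ := by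
        calc ∑ p, |y (φ p)| ≤ Real.sqrt j * Real.sqrt (∑ p, (y (φ p))^2) :=
              sum_abs_le_sqrt _
          _ ≤ Real.sqrt j * ‖y‖ := by
              refine mul_le_mul_of_nonneg_left ?_ (Real.sqrt_nonneg _)
              rw [← sqrt_sum_sq y]
              apply Real.sqrt_le_sqrt
              calc ∑ p, (y (φ p))^2 = ∑ i ∈ T, (y i)^2 := by
                    rw [hT, Finset.sum_image (fun a _ b _ h => hφinj h)]
                _ ≤ ∑ i, (y i)^2 := by
                    refine Finset.sum_le_sum_of_subset_of_nonneg (Finset.subset_univ T)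
                      fun i _ _ => by positivity
      have hsqrtj : Real.sqrt j ≤ Real.sqrt N := by
        apply Real.sqrt_le_sqrt
        exact_mod_cast Nat.le_of_lt hjN
      have hsqN : Real.sqrt N * Real.sqrt N = N := Real.mul_self_sqrt (le_of_lt hN0)
      have hchain : ‖wnew‖ ≤ ρ/4 := by
        have e1 : Sp ≤ Real.sqrt j * ‖y‖ / (8*N) := by
          rw [le_div_iff₀ h8Npos]
          calc Sp * (8*N) = (8*N) * Sp := by ring
            _ = ∑ p, |y (φ p)| := h2
            _ ≤ Real.sqrt j * ‖y‖ := h3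
        have e2 : Real.sqrt j * ‖y‖ ≤ Real.sqrt N * (2*ρ) :=
          mul_le_mul hsqrtj (le_of_lt hyshort) (norm_nonneg _) (Real.sqrt_nonneg _)
        have e3 : Real.sqrt N * (Real.sqrt N * (2*ρ) / (8*N)) = ρ/4 := by
          rw [show Real.sqrt N * (Real.sqrt N * (2*ρ) / (8*N))
              = (Real.sqrt N * Real.sqrt N) * (2*ρ) / (8*N) by ring, hsqN]
          field_simp
          ring
        calc ‖wnew‖ ≤ Real.sqrt N * Sp := h1
          _ ≤ Real.sqrt N * (Real.sqrt j * ‖y‖ / (8*N)) :=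
              mul_le_mul_of_nonneg_left e1 (Real.sqrt_nonneg _)
          _ ≤ Real.sqrt N * (Real.sqrt N * (2*ρ) / (8*N)) := by
              refine mul_le_mul_of_nonneg_left ?_ (Real.sqrt_nonneg _)
              rw [div_le_div_iff₀ h8Npos h8Npos]
              nlinarith [e2]
          _ = ρ/4 := e3
      linarith
    have hwnew_bd : ‖wnew‖ ≤ BB N * ρ := by
      have hcb : ∀ i, |wnew i| ≤ (8*N)^(N-1) * (2*ρ) := by
        intro i
        have h1 : wnew i = Real.exp (-(sv i)) * y i := by
          rw [hycoord i, ← mul_assoc, ← Real.exp_add]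
          simp
        rw [h1, abs_mul, abs_of_pos (Real.exp_pos _)]
        have h2 : |y i| ≤ 2*ρ := le_trans (abs_coord_le_norm y i) (le_of_lt hyshort)
        have h3 := hsv_lb i
        have h4 : 0 ≤ Real.exp (-(sv i)) := le_of_lt (Real.exp_pos _)
        have h5 : (0:ℝ) ≤ |y i| := abs_nonneg _
        nlinarith
      calc ‖wnew‖ ≤ Real.sqrt N * ((8*N)^(N-1) * (2*ρ)) :=
            norm_le_of_coords wnew _ (by positivity) hcb
        _ = BB N * ρ := by rw [BB]; ring
    refine ⟨Fin.snoc w wnew, ?_, ?_, ?_⟩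
    · intro p
      refine Fin.lastCases ?_ ?_ p
      · rw [Fin.snoc_last]
        exact ⟨v, hvΛ, hvne, rfl⟩
      · intro p'
        rw [Fin.snoc_castSucc]
        exact hwv p'
    · exact linearIndependent_fin_snoc.2 ⟨hwi, hnotin⟩
    · intro p
      refine Fin.lastCases ?_ ?_ p
      · rw [Fin.snoc_last]; exact hwnew_bd
      · intro p'
        rw [Fin.snoc_castSucc]
        exact hwb p'

noncomputable def epsN (N : ℕ) : ℝ := ((N.factorial : ℝ) * (BB N)^N + 1)⁻¹

lemma epsN_pos (N : ℕ) (hN : 2 ≤ N) : 0 < epsN N := by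
  have h1 : (0:ℝ) < BB N := BB_pos hN
  have h2 : (0:ℝ) < (N.factorial : ℝ) := by exact_mod_cast N.factorial_pos
  have : (0:ℝ) < (N.factorial : ℝ) * (BB N)^N + 1 := by positivity
  exact inv_pos.2 this

lemma epsN_le_one (N : ℕ) (hN : 2 ≤ N) : epsN N ≤ 1 := by
  have h1 : (0:ℝ) < BB N := BB_pos hN
  have h2 : (0:ℝ) < (N.factorial : ℝ) := by exact_mod_cast N.factorial_pos
  have h3 : (1:ℝ) ≤ (N.factorial : ℝ) * (BB N)^N + 1 := by nlinarith [pow_pos h1 N]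
  rw [epsN]
  rw [inv_le_one_iff₀]
  right; exact h3

lemma dAct_zero (v : EuclideanSpace ℝ (Fin N)) : dAct 0 v = v := by
  ext i
  rw [dAct_apply]
  show Real.exp ((0 : Fin N → ℝ) i) * v i = v i
  rw [Pi.zero_apply, Real.exp_zero, one_mul]

lemma det_ne_zero_of_indep {u : Fin N → EuclideanSpace ℝ (Fin N)}
    (hu : LinearIndependent ℝ u) : (Matrix.of fun p i => u p i).det ≠ 0 := by
  intro h0
  obtain ⟨cvec, hcne, hcv⟩ := Matrix.exists_vecMul_eq_zero_iff.2 h0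
  have hzero : ∑ p, cvec p • u p = 0 := by
    ext i
    rw [coord_sum]
    have h1 := congrFun hcv i
    simpa [Matrix.vecMul, dotProduct] using h1
  exact hcne (funext fun p => Fintype.linearIndependent_iff.1 hu cvec hzero p)

lemma core (hN : 2 ≤ N) (Λ : AddSubgroup (EuclideanSpace ℝ (Fin N)))
    (b : Fin N → EuclideanSpace ℝ (Fin N)) (hbi : LinearIndependent ℝ b)
    (hbs : (Submodule.span ℤ (Set.range b)).toAddSubgroup = Λ)
    (hdet : |(Matrix.of fun p i => b p i).det| = 1) :
    ∃ t : Fin N → ℝ, (∑ i, t i) = 0 ∧ ∀ v ∈ Λ, v ≠ 0 → epsN N ≤ ‖dAct t v‖ := by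
  haveI : Nonempty (Fin N) := ⟨⟨0, by omega⟩⟩
  have hmem : ∀ v ∈ Λ, ∃ c : Fin N → ℤ, ∑ i, c i • b i = v := by
    intro v hv
    rw [← hbs, Submodule.mem_toAddSubgroup] at hv
    exact (Submodule.mem_span_range_iff_exists_fun ℤ).1 hv
  -- discreteness
  set bb : Module.Basis (Fin N) ℝ (EuclideanSpace ℝ (Fin N)) :=
    basisOfLinearIndependentOfCardEqFinrank hbi (by simp) with hbbdef
  have hbb : ⇑bb = b := coe_basisOfLinearIndependentOfCardEqFinrank hbi _
  set K : ℝ := (∑ i, ‖LinearMap.toContinuousLinearMap (bb.coord i)‖) + 1 with hKdef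
  have hK : 0 < K := by
    have : (0:ℝ) ≤ ∑ i, ‖LinearMap.toContinuousLinearMap (bb.coord i)‖ :=
      Finset.sum_nonneg fun i _ => norm_nonneg _
    rw [hKdef]; linarith
  have hKb : ∀ (x : EuclideanSpace ℝ (Fin N)) i, |bb.repr x i| ≤ K * ‖x‖ := by
    intro x i
    have h1 : |bb.repr x i| = ‖LinearMap.toContinuousLinearMap (bb.coord i) x‖ := by
      rw [LinearMap.coe_toContinuousLinearMap']
      rw [Module.Basis.coord_apply, Real.norm_eq_abs]
    rw [h1]
    calc ‖LinearMap.toContinuousLinearMap (bb.coord i) x‖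
        ≤ ‖LinearMap.toContinuousLinearMap (bb.coord i)‖ * ‖x‖ :=
          ContinuousLinearMap.le_opNorm _ x
      _ ≤ K * ‖x‖ := by
          refine mul_le_mul_of_nonneg_right ?_ (norm_nonneg _)
          rw [hKdef]
          have := Finset.single_le_sum
            (f := fun i => ‖LinearMap.toContinuousLinearMap (bb.coord i)‖)
            (fun i _ => norm_nonneg _) (Finset.mem_univ i)
          linarith
  have hδ : ∀ v ∈ Λ, v ≠ 0 → K⁻¹ ≤ ‖v‖ := by
    intro v hv hvne
    obtain ⟨c, hc⟩ := hmem v hv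
    have hcne : ∃ i, c i ≠ 0 := by
      by_contra hall
      push_neg at hall
      apply hvne
      rw [← hc]
      refine Finset.sum_eq_zero fun i _ => ?_
      rw [hall i, zero_smul]
    obtain ⟨i, hine⟩ := hcne
    have hrepr : bb.repr v i = (c i : ℝ) := by
      have hv' : v = ∑ q, ((c q : ℝ)) • bb q := by
        rw [← hc]
        refine Finset.sum_congr rfl fun q _ => ?_
        rw [hbb]
        exact (Int.cast_smul_eq_zsmul ℝ (c q) (b q)).symm
      rw [hv']
      simp [map_sum, Finset.sum_apply', Finsupp.single_apply]
    have h1 : (1:ℝ) ≤ |bb.repr v i| := by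
      rw [hrepr]
      have : (1:ℤ) ≤ |c i| := Int.one_le_abs hine
      calc (1:ℝ) = ((1:ℤ):ℝ) := by norm_num
        _ ≤ ((|c i| : ℤ) : ℝ) := by exact_mod_cast this
        _ = |(c i : ℝ)| := by push_cast; ring
    have h2 := hKb v i
    rw [inv_eq_one_div, div_le_iff₀ hK]
    nlinarith [norm_nonneg v]
  -- contradiction setup
  by_contra hcon
  push_neg at hcon
  set GOOD : Set ℝ :=
    {c : ℝ | ∃ t : Fin N → ℝ, (∑ i, t i) = 0 ∧ ∀ v ∈ Λ, v ≠ 0 → c ≤ ‖dAct t v‖} with hGOOD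
  have hGne : K⁻¹ ∈ GOOD := by
    refine ⟨0, by simp, fun v hv hvne => ?_⟩
    rw [dAct_zero]
    exact hδ v hv hvne
  have hub : ∀ c ∈ GOOD, c ≤ epsN N := by
    rintro c ⟨t, ht, hc⟩
    obtain ⟨v, hvΛ, hvne, hvlt⟩ := hcon t ht
    exact le_of_lt (lt_of_le_of_lt (hc v hvΛ hvne) hvlt)
  have hbdd : BddAbove GOOD := ⟨epsN N, fun c hc => hub c hc⟩
  set ρ : ℝ := sSup GOOD with hρdef
  have hρ1 : K⁻¹ ≤ ρ := le_csSup hbdd hGne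
  have hρpos : 0 < ρ := lt_of_lt_of_le (inv_pos.2 hK) hρ1
  have hρle : ρ ≤ epsN N := csSup_le ⟨_, hGne⟩ hub
  obtain ⟨c₁, hc₁G, hc₁⟩ := exists_lt_of_lt_csSup ⟨_, hGne⟩ (half_lt_self hρpos)
  obtain ⟨t₀, ht₀, ht₀b⟩ := hc₁G
  have H1 : ∀ v ∈ Λ, v ≠ 0 → ρ/2 < ‖dAct t₀ v‖ :=
    fun v hv hn => lt_of_lt_of_le hc₁ (ht₀b v hv hn)
  have H2 : ∀ s : Fin N → ℝ, (∑ i, s i) = 0 →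
      ∃ v, v ∈ Λ ∧ v ≠ 0 ∧ ‖dAct (t₀ + s) v‖ < 2*ρ := by
    intro s hs
    by_contra hno
    push_neg at hno
    have hG2 : 2*ρ ∈ GOOD := by
      refine ⟨t₀ + s, ?_, ?_⟩
      · rw [show (∑ i, (t₀ + s) i) = (∑ i, t₀ i) + ∑ i, s i from Finset.sum_add_distrib]
        rw [ht₀, hs, add_zero]
      · intro v hv hvne
        exact hno v hv hvne
    have := le_csSup hbdd hG2
    linarith
  obtain ⟨w, hwv, hwi, hwb⟩ := key hN Λ t₀ ρ hρpos H1 H2 N (le_refl N)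
  choose vv hvΛ hvne hvw using hwv
  choose n hn using fun p => hmem (vv p) (hvΛ p)
  set Wmat : Matrix (Fin N) (Fin N) ℝ := Matrix.of fun p i => w p i with hWmat
  set Bmat : Matrix (Fin N) (Fin N) ℝ := Matrix.of fun p i => b p i with hBmat
  set nmat : Matrix (Fin N) (Fin N) ℤ := Matrix.of fun p q => n p q with hnmat
  set nR : Matrix (Fin N) (Fin N) ℝ := nmat.map (Int.castRingHom ℝ) with hnR
  have hWfact : Wmat = nR * Bmat * Matrix.diagonal (fun i => Real.exp (t₀ i)) := by
    ext p i
    rw [Matrix.mul_diagonal]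
    have h1 : Wmat p i = Real.exp (t₀ i) * vv p i := by
      rw [hWmat]
      show w p i = _
      rw [hvw p]
      exact dAct_apply t₀ (vv p) i
    have h2 : vv p i = ∑ q, (n p q : ℝ) * b q i := by
      rw [← hn p]
      exact coord_zsum (n p) b i
    have h3 : (nR * Bmat) p i = ∑ q, (n p q : ℝ) * b q i := by
      rw [Matrix.mul_apply]
      rfl
    rw [h1, h2, ← h3]
    ring
  have hdetd : (Matrix.diagonal (fun i => Real.exp (t₀ i))).det = 1 := by
    rw [Matrix.det_diagonal, ← Real.exp_sum, ht₀, Real.exp_zero]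
  have hdetW : Wmat.det = (nmat.det : ℝ) * Bmat.det := by
    rw [hWfact, Matrix.det_mul, Matrix.det_mul, hdetd, mul_one]
    congr 1
    rw [hnR]
    exact (RingHom.map_det (Int.castRingHom ℝ) nmat).symm
  have hWindep : LinearIndependent ℝ w := hwi
  have hWne : Wmat.det ≠ 0 := det_ne_zero_of_indep hWindep
  have hBne : Bmat.det ≠ 0 := by
    intro h0
    rw [hBmat] at h0
    rw [h0] at hdet
    simp at hdet
  have hdn : nmat.det ≠ 0 := by
    intro h0
    apply hWne
    rw [hdetW, h0]
    simp
  have h1le : (1:ℝ) ≤ |Wmat.det| := by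
    rw [hdetW, abs_mul]
    have h2 : |((nmat.det : ℤ) : ℝ)| = ((|nmat.det| : ℤ) : ℝ) := by push_cast; ring
    have h3 : (1:ℝ) ≤ |((nmat.det : ℤ) : ℝ)| := by
      rw [h2]
      exact_mod_cast Int.one_le_abs hdn
    have h4 : |Bmat.det| = 1 := hdet
    rw [h4, mul_one]
    exact h3
  have hBBρ : (0:ℝ) ≤ BB N * ρ := le_of_lt (mul_pos (BB_pos hN) hρpos)
  have hup : |Wmat.det| ≤ (N.factorial : ℝ) * (BB N * ρ)^N := by
    rw [Matrix.det_apply]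
    calc |∑ σ : Equiv.Perm (Fin N), Equiv.Perm.sign σ • ∏ i, Wmat (σ i) i|
        ≤ ∑ σ : Equiv.Perm (Fin N), |Equiv.Perm.sign σ • ∏ i, Wmat (σ i) i| :=
          Finset.abs_sum_le_sum_abs _ _
      _ ≤ ∑ _σ : Equiv.Perm (Fin N), (BB N * ρ)^N := by
          refine Finset.sum_le_sum fun σ _ => ?_
          have hsgn : |Equiv.Perm.sign σ • ∏ i, Wmat (σ i) i| = |∏ i, Wmat (σ i) i| := by
            rcases Int.units_eq_one_or (Equiv.Perm.sign σ) with h | h <;> simp [h]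
          rw [hsgn]
          rw [Finset.abs_prod]
          calc ∏ i, |Wmat (σ i) i| ≤ ∏ _i : Fin N, (BB N * ρ) := by
                refine Finset.prod_le_prod (fun i _ => abs_nonneg _) fun i _ => ?_
                calc |Wmat (σ i) i| = |w (σ i) i| := rfl
                  _ ≤ ‖w (σ i)‖ := abs_coord_le_norm _ _
                  _ ≤ BB N * ρ := hwb (σ i)
            _ = (BB N * ρ)^N := by rw [Finset.prod_const, Finset.card_univ, Fintype.card_fin]
      _ = (N.factorial : ℝ) * (BB N * ρ)^N := by
          rw [Finset.sum_const, Finset.card_univ, Fintype.card_perm, nsmul_eq_mul]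
          simp
  -- final numeric contradiction
  have hfac : (0:ℝ) < (N.factorial : ℝ) := by exact_mod_cast N.factorial_pos
  have hBB := BB_pos hN
  have hεpos := epsN_pos N hN
  have hε1 := epsN_le_one N hN
  set D : ℝ := (N.factorial : ℝ) * (BB N)^N with hD
  have hDpos : 0 < D := by rw [hD]; positivity
  have hρN : ρ^N ≤ epsN N := by
    calc ρ^N ≤ (epsN N)^N := pow_le_pow_left₀ (le_of_lt hρpos) hρle N
      _ ≤ epsN N := pow_le_of_le_one (le_of_lt hεpos) hε1 (by omega)
  have hchain : (1:ℝ) ≤ D * epsN N := by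
    calc (1:ℝ) ≤ |Wmat.det| := h1le
      _ ≤ (N.factorial : ℝ) * (BB N * ρ)^N := hup
      _ = D * ρ^N := by rw [hD, mul_pow]; ring
      _ ≤ D * epsN N := mul_le_mul_of_nonneg_left hρN (le_of_lt hDpos)
  have hlt : D * epsN N < 1 := by
    rw [epsN, hD]
    rw [show ((N.factorial : ℝ) * (BB N)^N) * ((N.factorial : ℝ) * (BB N)^N + 1)⁻¹
        = ((N.factorial : ℝ) * (BB N)^N) / ((N.factorial : ℝ) * (BB N)^N + 1) from
      (div_eq_mul_inv _ _).symm]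
    rw [div_lt_one (by linarith [hDpos] : (0:ℝ) < (N.factorial : ℝ) * (BB N)^N + 1)]
    linarith [hDpos]
  linarith

lemma gram_eq {m : ℕ} (u : Fin m → EuclideanSpace ℝ (Fin N)) :
    (Matrix.of fun i j : Fin m => (inner ℝ (u i) (u j) : ℝ))
      = (Matrix.of fun p k => u p k) * (Matrix.of fun p k => u p k)ᵀ := by
  ext i j
  rw [Matrix.mul_apply]
  show (inner ℝ (u i) (u j) : ℝ) = ∑ k, (u i k) * (u j k)
  rw [PiLp.inner_apply]
  simp [mul_comm]

lemma sqrt_gram (u : Fin N → EuclideanSpace ℝ (Fin N)) :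
    Real.sqrt (Matrix.det (Matrix.of fun i j : Fin N => (inner ℝ (u i) (u j) : ℝ)))
      = |(Matrix.of fun p i => u p i).det| := by
  rw [gram_eq, Matrix.det_mul, Matrix.det_transpose,
    show (Matrix.of fun p i => u p i).det * (Matrix.of fun p i => u p i).det
      = ((Matrix.of fun p i => u p i).det)^2 by ring]
  exact Real.sqrt_sq_eq_abs _

lemma covol_eq_abs_det (hN : 2 ≤ N) (Λ : AddSubgroup (EuclideanSpace ℝ (Fin N)))
    (b : Fin N → EuclideanSpace ℝ (Fin N)) (hbi : LinearIndependent ℝ b)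
    (hbs : (Submodule.span ℤ (Set.range b)).toAddSubgroup = Λ) :
    covol Λ = |(Matrix.of fun p i => b p i).det| := by
  have hbmemΛ : ∀ p, b p ∈ Λ := by
    intro p
    rw [← hbs, Submodule.mem_toAddSubgroup]
    exact Submodule.subset_span (Set.mem_range_self p)
  have hset : { x : ℝ | ∃ (r : ℕ) (v : Fin r → EuclideanSpace ℝ (Fin N)),
      LinearIndependent ℝ v ∧
      (Submodule.span ℤ (Set.range v)).toAddSubgroup = Λ ∧
      x = Real.sqrt (Matrix.det (Matrix.of fun i j : Fin r => (inner ℝ (v i) (v j) : ℝ))) }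
      = {|(Matrix.of fun p i => b p i).det|} := by
    ext x
    constructor
    · rintro ⟨r, v, hvi, hvs, rfl⟩
      classical
      have hle1 : r ≤ N := by
        have := hvi.fintype_card_le_finrank
        simpa using this
      have hvmemΛ : ∀ p, v p ∈ Λ := by
        intro p
        rw [← hvs, Submodule.mem_toAddSubgroup]
        exact Submodule.subset_span (Set.mem_range_self p)
      have hbv : ∀ p, b p ∈ Submodule.span ℝ (Set.range v) := by
        intro p
        have h1 : b p ∈ Submodule.span ℤ (Set.range v) := by
          rw [← Submodule.mem_toAddSubgroup, hvs]
          exact hbmemΛ p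
        exact Submodule.span_subset_span ℤ ℝ _ h1
      have hle2 : N ≤ r := by
        set b' : Fin N → ↥(Submodule.span ℝ (Set.range v)) :=
          fun p => ⟨b p, hbv p⟩ with hb'
        have hb'i : LinearIndependent ℝ b' := by
          apply LinearIndependent.of_comp (Submodule.span ℝ (Set.range v)).subtype
          show LinearIndependent ℝ (fun p => b p)
          exact hbi
        have h1 : N ≤ Module.finrank ℝ (Submodule.span ℝ (Set.range v)) := by
          have := hb'i.fintype_card_le_finrank
          simpa using this
        have h2 : Module.finrank ℝ (Submodule.span ℝ (Set.range v)) ≤ r := by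
          calc Module.finrank ℝ (Submodule.span ℝ (Set.range v))
              ≤ (Set.range v).toFinset.card := finrank_span_le_card _
            _ ≤ r := by
                rw [Set.toFinset_range]
                calc (Finset.univ.image v).card ≤ Finset.univ.card := Finset.card_image_le
                  _ = r := by simp
        omega
      have hrN : N = r := le_antisymm hle2 hle1
      subst hrN
      have hvmem : ∀ p, v p ∈ Submodule.span ℤ (Set.range b) := by
        intro p
        rw [← Submodule.mem_toAddSubgroup, hbs]
        exact hvmemΛ p
      have hbmem : ∀ p, b p ∈ Submodule.span ℤ (Set.range v) := by
        intro p
        rw [← Submodule.mem_toAddSubgroup, hvs]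
        exact hbmemΛ p
      choose nv hnv using fun p => (Submodule.mem_span_range_iff_exists_fun ℤ).1 (hvmem p)
      choose mv hmv using fun p => (Submodule.mem_span_range_iff_exists_fun ℤ).1 (hbmem p)
      set Bmat : Matrix (Fin N) (Fin N) ℝ := Matrix.of fun p i => b p i with hBmat
      set Vmat : Matrix (Fin N) (Fin N) ℝ := Matrix.of fun p i => v p i with hVmat
      set nvR : Matrix (Fin N) (Fin N) ℝ := (Matrix.of nv).map (Int.castRingHom ℝ) with hnvR
      set mvR : Matrix (Fin N) (Fin N) ℝ := (Matrix.of mv).map (Int.castRingHom ℝ) with hmvR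
      have hVfact : Vmat = nvR * Bmat := by
        ext p i
        have h2 : v p i = ∑ q, (nv p q : ℝ) * b q i := by
          rw [← hnv p]; exact coord_zsum (nv p) b i
        have h3 : (nvR * Bmat) p i = ∑ q, (nv p q : ℝ) * b q i := by
          rw [Matrix.mul_apply]; rfl
        rw [h3, ← h2]; rfl
      have hBfact : Bmat = mvR * Vmat := by
        ext p i
        have h2 : b p i = ∑ q, (mv p q : ℝ) * v q i := by
          rw [← hmv p]; exact coord_zsum (mv p) v i
        have h3 : (mvR * Vmat) p i = ∑ q, (mv p q : ℝ) * v q i := by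
          rw [Matrix.mul_apply]; rfl
        rw [h3, ← h2]; rfl
      have hBne : Bmat.det ≠ 0 := det_ne_zero_of_indep hbi
      have hprod : mvR.det * nvR.det = 1 := by
        have h1 : Bmat.det = mvR.det * nvR.det * Bmat.det := by
          calc Bmat.det = (mvR * Vmat).det := by rw [← hBfact]
            _ = mvR.det * Vmat.det := Matrix.det_mul _ _
            _ = mvR.det * (nvR.det * Bmat.det) := by rw [hVfact, Matrix.det_mul]
            _ = mvR.det * nvR.det * Bmat.det := by ring
        have h2 : (mvR.det * nvR.det - 1) * Bmat.det = 0 := by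
          rw [sub_mul, one_mul, ← h1, sub_self]
        rcases mul_eq_zero.1 h2 with h3 | h3
        · exact sub_eq_zero.1 h3
        · exact absurd h3 hBne
      have habs : |nvR.det| = 1 := by
        have hcast : ((((Matrix.of mv).det) * ((Matrix.of nv).det) : ℤ) : ℝ) = 1 := by
          rw [Int.cast_mul]
          rw [show (((Matrix.of mv).det : ℤ) : ℝ) = mvR.det from by
              rw [hmvR]; exact RingHom.map_det (Int.castRingHom ℝ) _,
            show (((Matrix.of nv).det : ℤ) : ℝ) = nvR.det from by
              rw [hnvR]; exact RingHom.map_det (Int.castRingHom ℝ) _]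
          exact hprod
        have hint : ((Matrix.of mv).det) * ((Matrix.of nv).det) = 1 := by exact_mod_cast hcast
        have := Int.eq_one_or_neg_one_of_mul_eq_one' hint
        have hdetnvR : nvR.det = (((Matrix.of nv).det : ℤ) : ℝ) := by
          rw [hnvR]; exact (RingHom.map_det (Int.castRingHom ℝ) _).symm
        rcases this with ⟨-, h2⟩ | ⟨-, h2⟩ <;> rw [hdetnvR, h2] <;> norm_num
      rw [sqrt_gram v]
      show |Vmat.det| = |Bmat.det|
      rw [hVfact, Matrix.det_mul, abs_mul, habs, one_mul]
    · rintro rfl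
      exact ⟨N, b, hbi, hbs, (sqrt_gram b).symm⟩
  rw [covol, hset, csInf_singleton]

end Stmt6

/-- Theorem 1.1 for `G = SL_N`, `Γ = SL_N(ℤ)`, `H` the positive diagonal group: every
unimodular lattice in `ℝ^N` can be moved by a positive diagonal matrix of determinant one so
that its shortest nonzero vector has length at least a universal `ε > 0`. -/
theorem stmt6 (N : ℕ) (hN : 2 ≤ N) :
    ∃ ε : ℝ, 0 < ε ∧
      ∀ Λ : AddSubgroup (EuclideanSpace ℝ (Fin N)),
        (∃ b : Fin N → EuclideanSpace ℝ (Fin N),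
          LinearIndependent ℝ b ∧ (Submodule.span ℤ (Set.range b)).toAddSubgroup = Λ) →
        covol Λ = 1 →
        ∃ a : Fin N → ℝ, (∀ i, 0 < a i) ∧ (∏ i, a i) = 1 ∧
          ∀ v ∈ Λ, v ≠ 0 →
            ε ≤ ‖(Matrix.toEuclideanLin (Matrix.diagonal a) v : EuclideanSpace ℝ (Fin N))‖ := by
  refine ⟨Stmt6.epsN N, Stmt6.epsN_pos N hN, ?_⟩
  rintro Λ ⟨b, hbi, hbs⟩ hcv
  have hdet : |(Matrix.of fun p i => b p i).det| = 1 := by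
    rw [← Stmt6.covol_eq_abs_det hN Λ b hbi hbs]
    exact hcv
  obtain ⟨t, ht, hb⟩ := Stmt6.core hN Λ b hbi hbs hdet
  refine ⟨fun i => Real.exp (t i), fun i => Real.exp_pos _, ?_, ?_⟩
  · rw [← Real.exp_sum, ht, Real.exp_zero]
  · intro v hv hvne
    exact hb v hv hvne
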